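/- Let G be a finite simple graph and let C_1 and C_2 be disjoint sets of vertices, each inducing a complete subgraph (clique) of G, with |C_1| = n and |C_2| = m. Let xy be an edge of G with x ∈ C_1 and y ∈ C_2, and let d_x, d_y denote the degrees of x and y. Then for every α ∈ [0,1], W(m_x, m_y) ≥ α + (1−α)·((n−1)/d_x + (m−1)/d_y − 1); equivalently, κ^α(xy) ≤ (1−α)·(2 − (n−1)/d_x − (m−1)/d_y). -/

import Mathlib

open Finset

/-- A probability measure on the vertex set. -/
def IsProbMeasure {V : Type*} [Fintype V] (μ : V → ℝ) : Prop :=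
  (∀ z, 0 ≤ μ z) ∧ ∑ z, μ z = 1

/-- A transference plan between two probability measures. -/
def IsTransferencePlan {V : Type*} [Fintype V] (μ ν : V → ℝ) (π : V → V → ℝ) : Prop :=
  (∀ i j, 0 ≤ π i j) ∧ (∀ i, ∑ j, π i j = μ i) ∧ (∀ j, ∑ i, π i j = ν j)

/-- The 1-Wasserstein distance between two measures on a graph:
the infimum of the transport cost over all transference plans. -/
noncomputable def Wass {V : Type*} [Fintype V] (G : SimpleGraph V) (μ ν : V → ℝ) : ℝ :=
  sInf {c : ℝ | ∃ π : V → V → ℝ, IsTransferencePlan μ ν π ∧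
    c = ∑ i : V, ∑ j : V, π i j * (G.dist i j : ℝ)}

open scoped Classical in
/-- The α-lazy random walk measure at a vertex `x`:
mass α at `x`, mass (1-α)/dₓ at each neighbour of `x`. -/
noncomputable def lazyWalk {V : Type*} [Fintype V] (G : SimpleGraph V) (α : ℝ) (x : V) :
    V → ℝ :=
  fun z =>
    if z = x then α
    else if G.Adj x z then (1 - α) / ((G.neighborSet x).ncard : ℝ) else 0

/-- The α-Ollivier-Ricci curvature of the edge `xy`: κ = 1 − W(mₓ, m_y). -/
noncomputable def kappa {V : Type*} [Fintype V] (G : SimpleGraph V) (α : ℝ) (x y : V) : ℝ :=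
  1 - Wass G (lazyWalk G α x) (lazyWalk G α y)

section Aux

open scoped Classical

variable {V : Type*} [Fintype V] {G : SimpleGraph V} {α : ℝ} {x z : V}

lemma lazyWalk_self : lazyWalk G α x x = α := by
  unfold lazyWalk; simp

lemma lazyWalk_adj (h : G.Adj x z) :
    lazyWalk G α x z = (1 - α) / ((G.neighborSet x).ncard : ℝ) := by
  unfold lazyWalk
  rw [if_neg h.ne', if_pos h]

lemma lazyWalk_nonneg (hα0 : 0 ≤ α) (hα1 : α ≤ 1) (z : V) :
    0 ≤ lazyWalk G α x z := by
  unfold lazyWalk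
  split_ifs with h1 h2
  · exact hα0
  · apply div_nonneg (by linarith) (by positivity)
  · exact le_refl 0

lemma lazyWalk_support (hz : lazyWalk G α x z ≠ 0) : z = x ∨ G.Adj x z := by
  by_contra hc
  push_neg at hc
  apply hz
  unfold lazyWalk
  rw [if_neg hc.1, if_neg hc.2]

lemma lazyWalk_split (z : V) :
    lazyWalk G α x z = (if z = x then α else 0) +
      (if G.Adj x z then (1 - α) / ((G.neighborSet x).ncard : ℝ) else 0) := by
  unfold lazyWalk
  split_ifs with h1 h2
  · subst h1; exact absurd h2 (G.irrefl)
  · ring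
  · ring
  · ring

lemma card_filter_adj (x : V) :
    (Finset.univ.filter (fun z => G.Adj x z)).card = (G.neighborSet x).ncard := by
  rw [Set.ncard_eq_toFinset_card']
  congr 1
  ext z
  simp [SimpleGraph.neighborSet]
  symm
  convert Set.mem_toFinset (s := {w | G.Adj x w}) (a := z)
  · exact Set.toFinset_congr rfl
  · exact Iff.rfl

lemma sum_lazyWalk (hx : 0 < (G.neighborSet x).ncard) :
    ∑ z, lazyWalk G α x z = 1 := by
  have hne : ((G.neighborSet x).ncard : ℝ) ≠ 0 := by positivity
  calc ∑ z, lazyWalk G α x z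
      = ∑ z, ((if z = x then α else 0) +
        (if G.Adj x z then (1 - α) / ((G.neighborSet x).ncard : ℝ) else 0)) := by
        exact Finset.sum_congr rfl fun z _ => lazyWalk_split z
    _ = α + ((G.neighborSet x).ncard : ℝ) * ((1 - α) / ((G.neighborSet x).ncard : ℝ)) := by
        rw [Finset.sum_add_distrib, Finset.sum_ite_eq' Finset.univ x (fun _ => α),
          if_pos (Finset.mem_univ x), ← Finset.sum_filter, Finset.sum_const,
          card_filter_adj, nsmul_eq_mul]
    _ = 1 := by field_simp; ring

lemma lazyWalk_isProb (hα0 : 0 ≤ α) (hα1 : α ≤ 1) (hx : 0 < (G.neighborSet x).ncard) :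
    IsProbMeasure (lazyWalk G α x) :=
  ⟨lazyWalk_nonneg hα0 hα1, sum_lazyWalk hx⟩

lemma prod_plan {μ ν : V → ℝ} (hμ : IsProbMeasure μ) (hν : IsProbMeasure ν) :
    IsTransferencePlan μ ν (fun i j => μ i * ν j) :=
  ⟨fun i j => mul_nonneg (hμ.1 i) (hν.1 j),
   fun i => by rw [← Finset.mul_sum, hν.2, mul_one],
   fun j => by rw [← Finset.sum_mul, hμ.2, one_mul]⟩

lemma plan_le_marginal {μ ν : V → ℝ} {π : V → V → ℝ} (hπ : IsTransferencePlan μ ν π)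
    (i j : V) : π i j ≤ μ i := by
  rw [← hπ.2.1 i]
  exact Finset.single_le_sum (fun k _ => hπ.1 i k) (Finset.mem_univ j)

lemma plan_le_marginal' {μ ν : V → ℝ} {π : V → V → ℝ} (hπ : IsTransferencePlan μ ν π)
    (i j : V) : π i j ≤ ν j := by
  rw [← hπ.2.2 j]
  exact Finset.single_le_sum (fun k _ => hπ.1 k j) (Finset.mem_univ i)

lemma duality_lower (μ ν : V → ℝ) (π : V → V → ℝ) (hπ : IsTransferencePlan μ ν π)
    (f : V → ℝ) (hf : ∀ i j, π i j ≠ 0 → f i - f j ≤ (G.dist i j : ℝ)) :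
    ∑ i, f i * μ i - ∑ j, f j * ν j ≤ ∑ i : V, ∑ j : V, π i j * (G.dist i j : ℝ) := by
  have key : ∑ i : V, ∑ j : V, π i j * (f i - f j) ≤
      ∑ i : V, ∑ j : V, π i j * (G.dist i j : ℝ) := by
    refine Finset.sum_le_sum fun i _ => Finset.sum_le_sum fun j _ => ?_
    by_cases h : π i j = 0
    · simp [h]
    · exact mul_le_mul_of_nonneg_left (hf i j h) (hπ.1 i j)
  have eq1 : ∑ i : V, ∑ j : V, π i j * (f i - f j) =
      ∑ i, f i * μ i - ∑ j, f j * ν j := by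
    have h1 : ∑ i : V, ∑ j : V, π i j * f i = ∑ i, f i * μ i := by
      refine Finset.sum_congr rfl fun i _ => ?_
      rw [← Finset.sum_mul, hπ.2.1 i, mul_comm]
    have h2 : ∑ i : V, ∑ j : V, π i j * f j = ∑ j, f j * ν j := by
      rw [Finset.sum_comm]
      refine Finset.sum_congr rfl fun j _ => ?_
      rw [← Finset.sum_mul, hπ.2.2 j, mul_comm]
    calc ∑ i : V, ∑ j : V, π i j * (f i - f j)
        = ∑ i : V, ∑ j : V, (π i j * f i - π i j * f j) := by
          simp [mul_sub]
      _ = ∑ i : V, ∑ j : V, π i j * f i - ∑ i : V, ∑ j : V, π i j * f j := by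
          rw [← Finset.sum_sub_distrib]
          exact Finset.sum_congr rfl fun i _ => by rw [← Finset.sum_sub_distrib]
      _ = ∑ i, f i * μ i - ∑ j, f j * ν j := by rw [h1, h2]
  linarith

lemma sum_lazyWalk_clique {C : Finset V}
    (hcl : ∀ u ∈ C, ∀ v ∈ C, u ≠ v → G.Adj u v) (hx : x ∈ C) :
    ∑ z ∈ C, lazyWalk G α x z =
      α + ((C.card : ℝ) - 1) * ((1 - α) / ((G.neighborSet x).ncard : ℝ)) := by
  rw [← Finset.add_sum_erase _ _ hx, lazyWalk_self]
  have h1 : ∑ z ∈ C.erase x, lazyWalk G α x z =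
      ∑ z ∈ C.erase x, (1 - α) / ((G.neighborSet x).ncard : ℝ) := by
    refine Finset.sum_congr rfl fun z hz => ?_
    exact lazyWalk_adj (hcl x hx z (Finset.mem_of_mem_erase hz)
      (Ne.symm (Finset.ne_of_mem_erase hz)))
  rw [h1, Finset.sum_const, nsmul_eq_mul, Finset.card_erase_of_mem hx]
  have hC : 1 ≤ C.card := Finset.card_pos.mpr ⟨x, hx⟩
  congr 1
  congr 1
  push_cast [hC]
  ring

end Aux

/-- If `C₁`, `C₂` are disjoint cliques of sizes `n`, `m` in a graph `G`
and `xy` is an edge with `x ∈ C₁`, `y ∈ C₂`, then for every `α ∈ [0,1]`,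
`W(mₓ, m_y) ≥ α + (1−α)((n−1)/dₓ + (m−1)/d_y − 1)`; equivalently,
`κ^α(xy) ≤ (1−α)(2 − (n−1)/dₓ − (m−1)/d_y)`. -/
theorem wasserstein_lower_bound_two_cliques
    {V : Type*} [Fintype V] (G : SimpleGraph V)
    (C₁ C₂ : Finset V) (hdisj : Disjoint C₁ C₂)
    (hcl₁ : ∀ u ∈ C₁, ∀ v ∈ C₁, u ≠ v → G.Adj u v)
    (hcl₂ : ∀ u ∈ C₂, ∀ v ∈ C₂, u ≠ v → G.Adj u v)
    (n m : ℕ) (hn : C₁.card = n) (hm : C₂.card = m)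
    (x y : V) (hx : x ∈ C₁) (hy : y ∈ C₂) (hxy : G.Adj x y)
    (α : ℝ) (hα0 : 0 ≤ α) (hα1 : α ≤ 1) :
    α + (1 - α) * (((n : ℝ) - 1) / ((G.neighborSet x).ncard : ℝ) +
        ((m : ℝ) - 1) / ((G.neighborSet y).ncard : ℝ) - 1) ≤
      Wass G (lazyWalk G α x) (lazyWalk G α y) ∧
    kappa G α x y ≤ (1 - α) * (2 - ((n : ℝ) - 1) / ((G.neighborSet x).ncard : ℝ) -
        ((m : ℝ) - 1) / ((G.neighborSet y).ncard : ℝ)) := by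
  classical
  have hdx : 0 < (G.neighborSet x).ncard :=
    (Set.ncard_pos (Set.toFinite _)).mpr ⟨y, hxy⟩
  have hdy : 0 < (G.neighborSet y).ncard :=
    (Set.ncard_pos (Set.toFinite _)).mpr ⟨x, hxy.symm⟩
  set μ := lazyWalk G α x with hμdef
  set ν := lazyWalk G α y with hνdef
  have hμ : IsProbMeasure μ := lazyWalk_isProb hα0 hα1 hdx
  have hν : IsProbMeasure ν := lazyWalk_isProb hα0 hα1 hdy
  -- the test function
  set f : V → ℝ := fun z => if z ∈ C₁ then (1 : ℝ) else 0 with hfdef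
  have hf0 : ∀ z, 0 ≤ f z := by intro z; simp only [hfdef]; split_ifs <;> norm_num
  have hf1 : ∀ z, f z ≤ 1 := by intro z; simp only [hfdef]; split_ifs <;> norm_num
  have hind : ∀ (g : V → ℝ), ∑ i, f i * g i = ∑ i ∈ C₁, g i := by
    intro g
    calc ∑ i, f i * g i = ∑ i, (if i ∈ C₁ then g i else 0) :=
          Finset.sum_congr rfl fun i _ => by
            simp only [hfdef]; split_ifs <;> simp
      _ = ∑ i ∈ Finset.univ ∩ C₁, g i := Finset.sum_ite_mem _ _ _
      _ = ∑ i ∈ C₁, g i := by rw [Finset.univ_inter]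
  -- value of ∑ f μ
  have hS1 : ∑ i, f i * μ i =
      α + ((n : ℝ) - 1) * ((1 - α) / ((G.neighborSet x).ncard : ℝ)) := by
    rw [hind, hμdef, sum_lazyWalk_clique hcl₁ hx, hn]
  -- bound on ∑ f ν
  have hS2 : ∑ j ∈ C₂, ν j =
      α + ((m : ℝ) - 1) * ((1 - α) / ((G.neighborSet y).ncard : ℝ)) := by
    rw [hνdef, sum_lazyWalk_clique hcl₂ hy, hm]
  have hS3 : ∑ j, f j * ν j ≤ 1 - ∑ j ∈ C₂, ν j := by
    rw [hind]
    have hsub : ∑ j ∈ C₁ ∪ C₂, ν j ≤ ∑ j, ν j :=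
      Finset.sum_le_sum_of_subset_of_nonneg (Finset.subset_univ _)
        (fun j _ _ => hν.1 j)
    rw [Finset.sum_union hdisj, hν.2] at hsub
    linarith
  -- the main Wasserstein bound
  have hW : α + (1 - α) * (((n : ℝ) - 1) / ((G.neighborSet x).ncard : ℝ) +
      ((m : ℝ) - 1) / ((G.neighborSet y).ncard : ℝ) - 1) ≤
      Wass G (lazyWalk G α x) (lazyWalk G α y) := by
    apply le_csInf
    · exact ⟨_, fun i j => μ i * ν j, prod_plan hμ hν, rfl⟩
    · rintro c ⟨π, hπ, rfl⟩
      have hf : ∀ i j, π i j ≠ 0 → f i - f j ≤ (G.dist i j : ℝ) := by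
        intro i j hne
        by_cases hi : i ∈ C₁
        · by_cases hj : j ∈ C₁
          · simp only [hfdef, if_pos hi, if_pos hj]
            simp [Nat.cast_nonneg]
          · -- f i - f j = 1, need dist ≥ 1
            have hiμ : lazyWalk G α x i ≠ 0 := by
              have h1 := plan_le_marginal hπ i j
              have h2 := hπ.1 i j
              intro h; rw [h] at h1
              exact hne (le_antisymm h1 h2)
            have hjν : lazyWalk G α y j ≠ 0 := by
              have h1 := plan_le_marginal' hπ i j
              have h2 := hπ.1 i j
              intro h; rw [h] at h1
              exact hne (le_antisymm h1 h2)
            have hri : G.Reachable i x := by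
              rcases lazyWalk_support hiμ with h | h
              · exact h ▸ SimpleGraph.Reachable.refl _
              · exact h.symm.reachable
            have hrj : G.Reachable y j := by
              rcases lazyWalk_support hjν with h | h
              · exact h ▸ SimpleGraph.Reachable.refl _
              · exact h.reachable
            have hr : G.Reachable i j := (hri.trans hxy.reachable).trans hrj
            have hij : i ≠ j := fun h => hj (h ▸ hi)
            have hd : 0 < G.dist i j := hr.pos_dist_of_ne hij
            have hd1 : (1 : ℝ) ≤ (G.dist i j : ℝ) := by exact_mod_cast hd
            simp only [hfdef, if_pos hi, if_neg hj]
            linarith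
        · have : f i - f j ≤ 0 := by
            simp only [hfdef, if_neg hi]
            have := hf0 j
            linarith
          exact this.trans (by positivity)
      have hdual := duality_lower μ ν π hπ f hf
      have hcast : ((n : ℝ) - 1) * ((1 - α) / ((G.neighborSet x).ncard : ℝ)) =
          (1 - α) * (((n : ℝ) - 1) / ((G.neighborSet x).ncard : ℝ)) := by ring
      have hcast' : ((m : ℝ) - 1) * ((1 - α) / ((G.neighborSet y).ncard : ℝ)) =
          (1 - α) * (((m : ℝ) - 1) / ((G.neighborSet y).ncard : ℝ)) := by ring
      rw [hcast] at hS1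
      rw [hcast'] at hS2
      linarith
  refine ⟨hW, ?_⟩
  unfold kappa
  have : (1 - α) * (2 - ((n : ℝ) - 1) / ((G.neighborSet x).ncard : ℝ) -
      ((m : ℝ) - 1) / ((G.neighborSet y).ncard : ℝ)) =
      1 - (α + (1 - α) * (((n : ℝ) - 1) / ((G.neighborSet x).ncard : ℝ) +
        ((m : ℝ) - 1) / ((G.neighborSet y).ncard : ℝ) - 1)) := by ring
  linarith
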